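/- Let P ∈ A be monic irreducible, G ∈ A nonzero, and let a ≥ 0 be the exact exponent of P in G (i.e. P^a ∣ G and P^{a+1} ∤ G). Then for every e ≥ 1: η(G, P^e) = |P|^e − |P|^{e−1} if 1 ≤ e ≤ a; η(G, P^e) = −|P|^a if e = a + 1; and η(G, P^e) = 0 if e > a + 1. -/

import Mathlib

open Polynomial UniqueFactorizationMonoid

variable (p : ℕ) [Fact p.Prime] (F : Type) [Field F] [Fintype F] [DecidableEq F]
  [Algebra (ZMod p) F]

/-- The absolute value `|G| = q ^ deg G` of a polynomial over `𝔽_q`. -/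
def anorm (G : Polynomial F) : ℕ := Fintype.card F ^ G.natDegree

/-- `t_H(A')`: the coefficient of `T^(m-1)` in the remainder of `A'` upon division by `H`,
where `m = deg H`. -/
noncomputable def tmap (H A' : Polynomial F) : F := (A' % H).coeff (H.natDegree - 1)

/-- The additive character `E(G,H)(D) = exp(2πi · tr(t_H(G·D)) / p)`. -/
noncomputable def echar (G H D : Polynomial F) : ℂ :=
  Complex.exp (2 * Real.pi * Complex.I *
    ((Algebra.trace (ZMod p) F (tmap F H (G * D))).val : ℂ) / (p : ℂ))

open scoped Classical in
/-- `ω(G)`: the number of distinct monic irreducible divisors of `G`. -/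
noncomputable def omega (G : Polynomial F) : ℕ := (normalizedFactors G).toFinset.card

open scoped Classical in
/-- The Möbius function on `𝔽_q[T]`. -/
noncomputable def mu (G : Polynomial F) : ℤ :=
  if Squarefree G then (-1) ^ omega F G else 0

/-- The polynomial Ramanujan sum `η(G,H)`: the sum of `E(G,H)(D)` over a complete residue
system `D` modulo `H` with `(D,H) = 1`. -/
noncomputable def eta (G H : Polynomial F) : ℂ :=
  ∑' D : {D : Polynomial F // D.degree < H.degree ∧ IsCoprime D H}, echar p F G H D.1

open scoped Classical in
/-- The unitary gcd `(G,H)_*`: the monic polynomial of highest degree dividing `G` and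
unitarily dividing `H`. -/
noncomputable def ugcd (G H : Polynomial F) : Polynomial F :=
  ∏ P ∈ (normalizedFactors H).toFinset,
    if P ^ (normalizedFactors H).count P ∣ G then P ^ (normalizedFactors H).count P else 1

/-- `μ*(G) = (-1)^(ω(G))`. -/
noncomputable def muStar (G : Polynomial F) : ℤ := (-1) ^ omega F G

/-- The unitary polynomial Ramanujan sum `η*(G,H)`: the sum of `E(G,H)(D)` over a complete
residue system `D` modulo `H` with `(D,H)_* = 1`. -/
noncomputable def etaStar (G H : Polynomial F) : ℂ :=
  ∑' D : {D : Polynomial F // D.degree < H.degree ∧ ugcd F D H = 1}, echar p F G H D.1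

section RamanujanAux

open scoped Classical

/-- The additive character `ψ = stdAddChar ∘ trace` on `F`. -/
noncomputable def psiRS (x : F) : ℂ := ZMod.stdAddChar (Algebra.trace (ZMod p) F x)

lemma psiRS_zero : psiRS p F 0 = 1 := by simp [psiRS]

lemma psiRS_add (x y : F) : psiRS p F (x + y) = psiRS p F x * psiRS p F y := by
  simp [psiRS, map_add, AddChar.map_add_eq_mul]

lemma exists_psiRS_ne_one : ∃ y : F, psiRS p F y ≠ 1 := by
  have hc : CharP F p := charP_of_injective_ringHom (algebraMap (ZMod p) F).injective p
  have hchar : ringChar F = p := ringChar.eq F p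
  subst hchar
  obtain ⟨b, hb⟩ := FiniteField.trace_to_zmod_nondegenerate F (one_ne_zero (α := F))
  rw [one_mul] at hb
  refine ⟨b, fun h => hb ?_⟩
  have h0 : psiRS (ringChar F) F 0 = 1 := psiRS_zero _ _
  unfold psiRS at h h0
  simpa using ZMod.injective_stdAddChar (h.trans h0.symm) |>.trans (map_zero _)

lemma echar_eq_psiRS (G H D : Polynomial F) :
    echar p F G H D = psiRS p F (tmap F H (G * D)) := by
  unfold echar psiRS
  rw [ZMod.stdAddChar_apply, ZMod.toCircle_apply]

/-- tmap with monic modulus in terms of `%ₘ`. -/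
lemma tmap_monic {H : Polynomial F} (hH : H.Monic) (A : Polynomial F) :
    tmap F H A = (A %ₘ H).coeff (H.natDegree - 1) := by
  rw [tmap, modByMonic_eq_mod A hH]

lemma tmap_add {H : Polynomial F} (hH : H.Monic) (A B : Polynomial F) :
    tmap F H (A + B) = tmap F H A + tmap F H B := by
  simp only [tmap_monic F hH, add_modByMonic, coeff_add]

lemma tmap_smul {H : Polynomial F} (hH : H.Monic) (c : F) (A : Polynomial F) :
    tmap F H (c • A) = c * tmap F H A := by
  simp only [tmap_monic F hH, smul_modByMonic, coeff_smul, smul_eq_mul]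

lemma tmap_eq_zero_of_dvd {H : Polynomial F} (hH : H.Monic) {A : Polynomial F} (h : H ∣ A) :
    tmap F H A = 0 := by
  rw [tmap_monic F hH, (modByMonic_eq_zero_iff_dvd hH).mpr h, coeff_zero]

/-- The set of polynomials of degree `< n` is finite. -/
lemma degLT_set_finite (n : ℕ) : {D : Polynomial F | D.degree < (n : ℕ)}.Finite := by
  have h1 : Finite (degreeLT F n) := Finite.of_equiv _ (degreeLTEquiv F n).symm.toEquiv
  have h2 : {D : Polynomial F | D.degree < (n : ℕ)} = (degreeLT F n : Set (Polynomial F)) := by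
    ext D; simp [Polynomial.mem_degreeLT]
  rw [h2]
  exact Set.toFinite _

/-- The finset of polynomials of degree `< n`. -/
noncomputable def degLT (n : ℕ) : Finset (Polynomial F) := (degLT_set_finite F n).toFinset

lemma mem_degLT {n : ℕ} {D : Polynomial F} : D ∈ degLT F n ↔ D.degree < (n : ℕ) :=
  Set.Finite.mem_toFinset _

lemma card_degLT (n : ℕ) : (degLT F n).card = Fintype.card F ^ n := by
  have h2 : {D : Polynomial F | D.degree < (n : ℕ)} = (degreeLT F n : Set (Polynomial F)) := by
    ext D; simp [Polynomial.mem_degreeLT]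
  have e : {D : Polynomial F | D.degree < (n : ℕ)} ≃ (Fin n → F) :=
    (Equiv.setCongr h2).trans (degreeLTEquiv F n).toEquiv
  rw [degLT, ← Set.ncard_eq_toFinset_card _ (degLT_set_finite F n), ← Nat.card_coe_set_eq,
    Nat.card_congr e, Nat.card_eq_fintype_card, Fintype.card_fun, Fintype.card_fin]

set_option linter.unusedSectionVars false

/-- Uniqueness of the remainder. -/
lemma modByMonic_eq_of_dvd_sub {H A R : Polynomial F} (hH : H.Monic) (h : H ∣ (A - R))
    (hdeg : R.degree < H.degree) : A %ₘ H = R := by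
  have h1 : (A - R) %ₘ H = 0 := (modByMonic_eq_zero_iff_dvd hH).mpr h
  rw [sub_modByMonic, sub_eq_zero] at h1
  rw [h1, (modByMonic_eq_self_iff hH).mpr hdeg]

lemma sum_echar_of_dvd {G H : Polynomial F} (hH : H.Monic) (h : H ∣ G) :
    ∑ D ∈ degLT F H.natDegree, echar p F G H D = (Fintype.card F : ℂ) ^ H.natDegree := by
  have h1 : ∀ D ∈ degLT F H.natDegree, echar p F G H D = 1 := by
    intro D _
    rw [echar_eq_psiRS, tmap_eq_zero_of_dvd F hH (h.mul_right D), psiRS_zero]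
  rw [Finset.sum_congr rfl h1, Finset.sum_const, card_degLT, nsmul_eq_mul, mul_one]
  push_cast
  ring

lemma sum_echar_of_not_dvd {G H : Polynomial F} (hH : H.Monic) (h : ¬ H ∣ G) :
    ∑ D ∈ degLT F H.natDegree, echar p F G H D = 0 := by
  set n := H.natDegree with hn
  have hH0 : H ≠ 0 := hH.ne_zero
  have hdegH : H.degree = (n : ℕ) := degree_eq_natDegree hH0
  have hn1 : 1 ≤ n := by
    rcases Nat.eq_zero_or_pos n with h0 | h1
    · exact absurd ((hH.natDegree_eq_zero).mp h0 ▸ one_dvd G) h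
    · exact h1
  set R := G %ₘ H with hRdef
  have hR0 : R ≠ 0 := fun h0 => h ((modByMonic_eq_zero_iff_dvd hH).mp h0)
  have hdR : R.natDegree < n := by
    have h2 := degree_modByMonic_lt G hH
    rw [hdegH] at h2
    exact (natDegree_lt_iff_degree_lt hR0).mpr h2
  obtain ⟨y, hy⟩ := exists_psiRS_ne_one p F
  have hy0 : y ≠ 0 := fun h0 => hy (h0 ▸ psiRS_zero p F)
  set d := R.natDegree with hd
  set c := R.leadingCoeff with hc
  have hc0 : c ≠ 0 := leadingCoeff_ne_zero.mpr hR0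
  set a : F := y * c⁻¹ with hadef
  have ha0 : a ≠ 0 := mul_ne_zero hy0 (inv_ne_zero hc0)
  set D0 : Polynomial F := C a * X ^ (n - 1 - d) with hD0
  have hdD0 : D0.degree = ((n - 1 - d : ℕ) : WithBot ℕ) := by
    rw [hD0, degree_C_mul_X_pow _ ha0]
  have hmod : (G * D0) %ₘ H = R * D0 := by
    apply modByMonic_eq_of_dvd_sub F hH
    · refine ⟨(G /ₘ H) * D0, ?_⟩
      have h3 := modByMonic_add_div G H
      linear_combination -D0 * h3 - D0 * hRdef
    · rw [degree_mul, hdD0, degree_eq_natDegree hR0, ← hd, hdegH]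
      rw [← Nat.cast_add]
      exact_mod_cast (by omega : d + (n - 1 - d) < n)
  have hcoeff : tmap F H (G * D0) = y := by
    rw [tmap_monic F hH, hmod, ← hn, hD0]
    have h4 : R * (C a * X ^ (n - 1 - d)) = (C a * R) * X ^ (n - 1 - d) := by ring
    rw [h4, coeff_mul_X_pow', if_pos (by omega), coeff_C_mul]
    have h5 : n - 1 - (n - 1 - d) = d := by omega
    rw [h5]
    have h6 : R.coeff d = c := rfl
    rw [h6, hadef]
    field_simp
  have hD0mem : D0.degree < (n : ℕ) := by
    rw [hdD0]
    exact_mod_cast (by omega : n - 1 - d < n)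
  have key : ∀ D : Polynomial F, echar p F G H (D + D0) = psiRS p F y * echar p F G H D := by
    intro D
    rw [echar_eq_psiRS, echar_eq_psiRS, mul_add, tmap_add F hH, psiRS_add, hcoeff, mul_comm]
  have htrans : ∑ D ∈ degLT F n, echar p F G H (D + D0) = ∑ D ∈ degLT F n, echar p F G H D := by
    apply Finset.sum_nbij' (i := fun D => D + D0) (j := fun D => D - D0)
    · intro D hD
      rw [mem_degLT] at hD ⊢
      exact lt_of_le_of_lt (degree_add_le _ _) (max_lt hD hD0mem)
    · intro D hD
      rw [mem_degLT] at hD ⊢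
      exact lt_of_le_of_lt (degree_sub_le _ _) (max_lt hD hD0mem)
    · intro D _; ring
    · intro D _; ring
    · intro D _; rfl
  have heq : (1 - psiRS p F y) * ∑ D ∈ degLT F n, echar p F G H D = 0 := by
    have h7 : ∑ D ∈ degLT F n, echar p F G H (D + D0)
        = psiRS p F y * ∑ D ∈ degLT F n, echar p F G H D := by
      rw [Finset.mul_sum]
      exact Finset.sum_congr rfl (fun D _ => key D)
    rw [h7] at htrans
    linear_combination -htrans
  rcases mul_eq_zero.mp heq with h1 | h2
  · exact absurd (by linear_combination -h1) hy
  · exact h2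

lemma mul_modByMonic_pow {P : Polynomial F} (hP : P.Monic) {e : ℕ} (he : 1 ≤ e)
    (A : Polynomial F) : (P * A) %ₘ P ^ e = P * (A %ₘ P ^ (e - 1)) := by
  have hee : P ^ e = P * P ^ (e - 1) := by
    conv_lhs => rw [show e = 1 + (e - 1) by omega]
    rw [pow_add, pow_one]
  set S := A %ₘ P ^ (e - 1) with hSdef
  have hdvd : P ^ (e - 1) ∣ (A - S) := by
    refine ⟨A /ₘ P ^ (e - 1), ?_⟩
    have h3 := modByMonic_add_div A (P ^ (e - 1))
    linear_combination -h3 - hSdef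
  rcases eq_or_ne S 0 with h0 | h0
  · rw [h0, mul_zero]
    rw [h0, sub_zero] at hdvd
    refine (modByMonic_eq_zero_iff_dvd (hP.pow e)).mpr ?_
    rw [hee]
    exact mul_dvd_mul_left P hdvd
  · apply modByMonic_eq_of_dvd_sub F (hP.pow e)
    · have h4 : P * A - P * S = P * (A - S) := by ring
      rw [h4, hee]
      exact mul_dvd_mul_left P hdvd
    · have hdS : S.degree < (P ^ (e - 1)).degree := degree_modByMonic_lt A (hP.pow (e - 1))
      rw [degree_mul, hee, degree_mul]
      exact WithBot.add_lt_add_left (by simp [hP.ne_zero, degree_eq_natDegree]) hdS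

lemma tmap_pow_mul {P : Polynomial F} (hP : P.Monic) (hm : 1 ≤ P.natDegree) {e : ℕ}
    (he : 1 ≤ e) (A : Polynomial F) :
    tmap F (P ^ e) (P * A) = tmap F (P ^ (e - 1)) A := by
  set m := P.natDegree with hmdef
  rw [tmap_monic F (hP.pow e), tmap_monic F (hP.pow (e - 1)), mul_modByMonic_pow F hP he A,
    hP.natDegree_pow e, hP.natDegree_pow (e - 1)]
  set S := A %ₘ P ^ (e - 1) with hSdef
  rcases eq_or_ne S 0 with h0 | h0
  · simp [h0]
  rcases eq_or_ne e 1 with he1 | he1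
  · exfalso
    apply h0
    rw [hSdef, he1]
    simpa using (modByMonic_eq_zero_iff_dvd monic_one).mpr (one_dvd A)
  have he2 : 2 ≤ e := by omega
  set k := (e - 1) * m with hkdef
  have hk1 : 1 ≤ k := by
    rw [hkdef]
    exact Nat.mul_pos (by omega) hm
  have hem : e * m = m + k := by
    rw [hkdef]
    calc e * m = (1 + (e - 1)) * m := by rw [show 1 + (e - 1) = e by omega]
      _ = m + (e - 1) * m := by rw [add_mul, one_mul]
  have hSd : S.natDegree < k := by
    have hd := degree_modByMonic_lt A (hP.pow (e - 1))
    rw [degree_eq_natDegree (hP.pow (e - 1)).ne_zero, hP.natDegree_pow (e - 1)] at hd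
    exact (natDegree_lt_iff_degree_lt h0).mpr hd
  rw [show e * m - 1 = m + (k - 1) by omega, coeff_mul]
  have hsum : ∑ x ∈ Finset.HasAntidiagonal.antidiagonal (m + (k - 1)), P.coeff x.1 * S.coeff x.2
      = P.coeff m * S.coeff (k - 1) := by
    apply Finset.sum_eq_single ((m, k - 1) : ℕ × ℕ)
    · rintro ⟨b1, b2⟩ hb hne
      rw [Finset.HasAntidiagonal.mem_antidiagonal] at hb
      simp only at hb ⊢
      rcases lt_trichotomy b1 m with h1 | h1 | h1
      · have h2 : S.natDegree < b2 := by omega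
        rw [coeff_eq_zero_of_natDegree_lt h2, mul_zero]
      · exfalso
        exact hne (by rw [Prod.mk.injEq]; omega)
      · have h2 : P.natDegree < b1 := by omega
        rw [coeff_eq_zero_of_natDegree_lt h2, zero_mul]
    · intro hnot
      exfalso
      exact hnot (by rw [Finset.HasAntidiagonal.mem_antidiagonal])
  rw [hsum, hmdef, hP.coeff_natDegree, one_mul]

lemma eta_eq_sum {G H : Polynomial F} (hH : H.Monic) :
    eta p F G H
      = ∑ D ∈ (degLT F H.natDegree).filter (fun D => IsCoprime D H), echar p F G H D := by
  have hdegH : H.degree = (H.natDegree : ℕ) := degree_eq_natDegree hH.ne_zero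
  have hmem : ∀ D : Polynomial F,
      D ∈ (degLT F H.natDegree).filter (fun D => IsCoprime D H) ↔
        (D.degree < H.degree ∧ IsCoprime D H) := by
    intro D
    rw [Finset.mem_filter, mem_degLT, hdegH]
  haveI : Fintype {D : Polynomial F // D.degree < H.degree ∧ IsCoprime D H} :=
    Fintype.ofFinset _ hmem
  rw [show _root_.eta p F G H = ∑' D : {D : Polynomial F // D.degree < H.degree ∧
    IsCoprime D H}, echar p F G H D.1 from rfl, tsum_fintype]
  exact (Finset.sum_subtype _ hmem _).symm

lemma coprime_pow_iff {P : Polynomial F} (hirr : Irreducible P) {e : ℕ} (he : 1 ≤ e)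
    (D : Polynomial F) : IsCoprime D (P ^ e) ↔ ¬ P ∣ D := by
  rw [IsCoprime.pow_right_iff he, isCoprime_comm, hirr.coprime_iff_not_dvd]

lemma sum_split {G P : Polynomial F} (hP : P.Monic) (hirr : Irreducible P) {e : ℕ}
    (he : 1 ≤ e) :
    eta p F G (P ^ e) = (∑ D ∈ degLT F ((P ^ e).natDegree), echar p F G (P ^ e) D)
      - ∑ D ∈ (degLT F ((P ^ e).natDegree)).filter (fun D => P ∣ D), echar p F G (P ^ e) D := by
  rw [eta_eq_sum p F (hP.pow e), eq_sub_iff_add_eq, ← Finset.sum_filter_add_sum_filter_not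
    (degLT F ((P ^ e).natDegree)) (fun D => IsCoprime D (P ^ e))]
  congr 1
  apply Finset.sum_congr _ (fun _ _ => rfl)
  apply Finset.filter_congr
  intro D _
  rw [coprime_pow_iff F hirr he, not_not]

lemma sum_mult {G P : Polynomial F} (hP : P.Monic) (hm : 1 ≤ P.natDegree) {e : ℕ}
    (he : 1 ≤ e) :
    ∑ D ∈ (degLT F ((P ^ e).natDegree)).filter (fun D => P ∣ D), echar p F G (P ^ e) D
      = ∑ D ∈ degLT F ((P ^ (e - 1)).natDegree), echar p F G (P ^ (e - 1)) D := by
  have hem : e * P.natDegree = P.natDegree + (e - 1) * P.natDegree := by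
    calc e * P.natDegree = (1 + (e - 1)) * P.natDegree := by rw [show 1 + (e - 1) = e by omega]
      _ = P.natDegree + (e - 1) * P.natDegree := by rw [add_mul, one_mul]
  symm
  apply Finset.sum_bij (i := fun D _ => P * D)
  · intro D hD
    rw [mem_degLT, hP.natDegree_pow] at hD
    rw [Finset.mem_filter, mem_degLT, hP.natDegree_pow]
    refine ⟨?_, dvd_mul_right P D⟩
    rcases eq_or_ne D 0 with h0 | h0
    · rw [h0, mul_zero, degree_zero]
      exact WithBot.bot_lt_coe _
    · have hD' : D.natDegree < (e - 1) * P.natDegree := (natDegree_lt_iff_degree_lt h0).mpr hD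
      rw [← natDegree_lt_iff_degree_lt (mul_ne_zero hP.ne_zero h0),
        natDegree_mul hP.ne_zero h0]
      omega
  · intro a₁ _ a₂ _ hi
    exact mul_left_cancel₀ hP.ne_zero hi
  · intro b hb
    rw [Finset.mem_filter, mem_degLT, hP.natDegree_pow] at hb
    obtain ⟨hQ, Q, rfl⟩ := hb
    refine ⟨Q, ?_, rfl⟩
    rw [mem_degLT, hP.natDegree_pow]
    rcases eq_or_ne Q 0 with h0 | h0
    · rw [h0, degree_zero]
      exact WithBot.bot_lt_coe _
    · have hb0 : P * Q ≠ 0 := mul_ne_zero hP.ne_zero h0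
      have h1 : (P * Q).natDegree < e * P.natDegree := (natDegree_lt_iff_degree_lt hb0).mpr hQ
      rw [natDegree_mul hP.ne_zero h0] at h1
      rw [← natDegree_lt_iff_degree_lt h0]
      omega
  · intro D _
    rw [echar_eq_psiRS, echar_eq_psiRS, show G * (P * D) = P * (G * D) by ring,
      tmap_pow_mul F hP hm he]

end RamanujanAux

/-- Let `P` be monic irreducible, `G ≠ 0`, and `a` the exact exponent of `P` in `G`.
Then for `e ≥ 1`: `η(G,P^e) = |P|^e − |P|^(e−1)` if `1 ≤ e ≤ a`, `η(G,P^e) = −|P|^a`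
if `e = a+1`, and `η(G,P^e) = 0` if `e > a+1`. -/
theorem eta_prime_pow (P : Polynomial F) (hP : P.Monic) (hirr : Irreducible P)
    (G : Polynomial F) (hG : G ≠ 0) (a : ℕ) (ha : P ^ a ∣ G) (ha' : ¬ P ^ (a + 1) ∣ G)
    (e : ℕ) (he : 1 ≤ e) :
    (e ≤ a → eta p F G (P ^ e) = (anorm F P : ℂ) ^ e - (anorm F P : ℂ) ^ (e - 1)) ∧
    (e = a + 1 → eta p F G (P ^ e) = -(anorm F P : ℂ) ^ a) ∧
    (a + 1 < e → eta p F G (P ^ e) = 0) := by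
  classical
  have hm : 1 ≤ P.natDegree := by
    by_contra hcon
    push_neg at hcon
    have h0 : P.natDegree = 0 := by omega
    exact hirr.not_isUnit ((hP.natDegree_eq_zero.mp h0) ▸ isUnit_one)
  have hdvd : ∀ k : ℕ, (P ^ k ∣ G ↔ k ≤ a) := by
    intro k
    constructor
    · intro hk
      by_contra hcon
      push_neg at hcon
      exact ha' ((pow_dvd_pow P (by omega)).trans hk)
    · intro hk
      exact (pow_dvd_pow P hk).trans ha
  have hfull : ∀ k : ℕ, (∑ D ∈ degLT F ((P ^ k).natDegree), echar p F G (P ^ k) D)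
      = if k ≤ a then ((Fintype.card F : ℂ) ^ P.natDegree) ^ k else 0 := by
    intro k
    by_cases hk : k ≤ a
    · rw [if_pos hk, sum_echar_of_dvd p F (hP.pow k) ((hdvd k).mpr hk),
        hP.natDegree_pow, mul_comm, pow_mul]
    · rw [if_neg hk,
        sum_echar_of_not_dvd p F (hP.pow k) (fun hcon => hk ((hdvd k).mp hcon))]
  have hkey : eta p F G (P ^ e)
      = (if e ≤ a then ((Fintype.card F : ℂ) ^ P.natDegree) ^ e else 0)
        - (if e - 1 ≤ a then ((Fintype.card F : ℂ) ^ P.natDegree) ^ (e - 1) else 0) := by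
    rw [sum_split p F hP hirr he, sum_mult p F hP hm he,
      hfull e, hfull (e - 1)]
  have hanorm : (anorm F P : ℂ) = (Fintype.card F : ℂ) ^ P.natDegree := by
    rw [anorm]
    push_cast
    ring
  refine ⟨?_, ?_, ?_⟩
  · intro h
    rw [hkey, if_pos h, if_pos (by omega), hanorm]
  · intro h
    rw [hkey, if_neg (by omega), if_pos (by omega), hanorm, zero_sub, show e - 1 = a by omega]
  · intro h
    rw [hkey, if_neg (by omega), if_neg (by omega), sub_zero]
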